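/- Let $V$ be a vector space of dimension $m \geq 2n$ with $2n \geq 6$, with basis $e_1,\ldots,e_m$, and let $\omega = e_1\wedge e_2 + e_3\wedge e_4 + \cdots + e_{2n-1}\wedge e_{2n} \in \Lambda^2 V$. Then the only bivector $a \in \Lambda^2 V$ satisfying $a \wedge \omega = 0$ is $a = 0$. -/

import Mathlib

set_option maxRecDepth 8000

open ExteriorAlgebra

section Aux

variable {m : ℕ} {V : Type*} [AddCommGroup V] [Module ℝ V]

lemma detRow_eq {k : ℕ} (f : Fin k → Fin k → ℝ) :
    Matrix.detRowAlternating f = Matrix.det (Matrix.of f) := rfl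

noncomputable def form2 (e : Module.Basis (Fin m) ℝ V) (p q : Fin m) : V [⋀^Fin 2]→ₗ[ℝ] ℝ :=
  (Matrix.detRowAlternating).compLinearMap (LinearMap.pi (fun j => e.coord (![p, q] j)))

noncomputable def form4 (e : Module.Basis (Fin m) ℝ V) (p q r s : Fin m) : V [⋀^Fin 4]→ₗ[ℝ] ℝ :=
  (Matrix.detRowAlternating).compLinearMap (LinearMap.pi (fun j => e.coord (![p, q, r, s] j)))

lemma form2_apply (e : Module.Basis (Fin m) ℝ V) (p q : Fin m) (v : Fin 2 → V) :
    form2 e p q v = e.repr (v 0) p * e.repr (v 1) q - e.repr (v 0) q * e.repr (v 1) p := by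
  simp [form2, detRow_eq, Matrix.det_fin_two, Module.Basis.coord_apply]

lemma form4_apply (e : Module.Basis (Fin m) ℝ V) (p q r s : Fin m) (v : Fin 4 → V) :
    form4 e p q r s v =
      Matrix.det (Matrix.of fun i j => e.repr (v i) (![p, q, r, s] j)) := by
  rw [form4, AlternatingMap.compLinearMap_apply, detRow_eq]
  congr 1

lemma det_fin_four (A : Matrix (Fin 4) (Fin 4) ℝ) :
    A.det =
      A 0 0 * (A 1 1 * (A 2 2 * A 3 3 - A 2 3 * A 3 2) - A 1 2 * (A 2 1 * A 3 3 - A 2 3 * A 3 1)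
        + A 1 3 * (A 2 1 * A 3 2 - A 2 2 * A 3 1))
      - A 0 1 * (A 1 0 * (A 2 2 * A 3 3 - A 2 3 * A 3 2) - A 1 2 * (A 2 0 * A 3 3 - A 2 3 * A 3 0)
        + A 1 3 * (A 2 0 * A 3 2 - A 2 2 * A 3 0))
      + A 0 2 * (A 1 0 * (A 2 1 * A 3 3 - A 2 3 * A 3 1) - A 1 1 * (A 2 0 * A 3 3 - A 2 3 * A 3 0)
        + A 1 3 * (A 2 0 * A 3 1 - A 2 1 * A 3 0))
      - A 0 3 * (A 1 0 * (A 2 1 * A 3 2 - A 2 2 * A 3 1) - A 1 1 * (A 2 0 * A 3 2 - A 2 2 * A 3 0)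
        + A 1 2 * (A 2 0 * A 3 1 - A 2 1 * A 3 0)) := by
  rw [Matrix.det_succ_row_zero]
  simp [Fin.sum_univ_succ, Matrix.det_fin_three, Fin.succAbove]
  ring

lemma form4_row2_zero (e : Module.Basis (Fin m) ℝ V) (p q r s x : Fin m) (u0 u1 w : V)
    (h1 : x ≠ p) (h2 : x ≠ q) (h3 : x ≠ r) (h4 : x ≠ s) :
    form4 e p q r s ![u0, u1, e x, w] = 0 := by
  rw [form4_apply]
  apply Matrix.det_eq_zero_of_row_eq_zero 2
  intro j
  fin_cases j <;> simp [Module.Basis.repr_self_apply, h1, h2, h3, h4]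

lemma form4_row3_zero (e : Module.Basis (Fin m) ℝ V) (p q r s y : Fin m) (u0 u1 w : V)
    (h1 : y ≠ p) (h2 : y ≠ q) (h3 : y ≠ r) (h4 : y ≠ s) :
    form4 e p q r s ![u0, u1, w, e y] = 0 := by
  rw [form4_apply]
  apply Matrix.det_eq_zero_of_row_eq_zero 3
  intro j
  fin_cases j <;> simp [Module.Basis.repr_self_apply, h1, h2, h3, h4]

lemma form4_back (e : Module.Basis (Fin m) ℝ V) (p q r s : Fin m) (u0 u1 : V)
    (hrp : r ≠ p) (hrq : r ≠ q) (hsp : s ≠ p) (hsq : s ≠ q) (hsr : s ≠ r) :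
    form4 e p q r s ![u0, u1, e r, e s] = form2 e p q ![u0, u1] := by
  rw [form4_apply, det_fin_four, form2_apply]
  simp [Module.Basis.repr_self_apply, hrp, hrq, hsp, hsq, hsr]

lemma form4_front (e : Module.Basis (Fin m) ℝ V) (p q r s : Fin m) (u0 u1 : V)
    (hpq : p ≠ q) (hpr : p ≠ r) (hps : p ≠ s) (hqr : q ≠ r) (hqs : q ≠ s) :
    form4 e p q r s ![u0, u1, e p, e q] = form2 e r s ![u0, u1] := by
  rw [form4_apply, det_fin_four, form2_apply]
  simp [Module.Basis.repr_self_apply, hpq, hpr, hps, hqr, hqs]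

noncomputable def lf2 (e : Module.Basis (Fin m) ℝ V) (p q : Fin m) :
    ExteriorAlgebra ℝ V →ₗ[ℝ] ℝ := liftAlternating (Pi.single 2 (form2 e p q))

noncomputable def lf4 (e : Module.Basis (Fin m) ℝ V) (p q r s : Fin m) :
    ExteriorAlgebra ℝ V →ₗ[ℝ] ℝ := liftAlternating (Pi.single 4 (form4 e p q r s))

lemma lf2_ιMulti (e : Module.Basis (Fin m) ℝ V) (p q : Fin m) (v : Fin 2 → V) :
    lf2 e p q (ιMulti ℝ 2 v) = form2 e p q v := by
  rw [lf2, liftAlternating_apply_ιMulti, Pi.single_eq_same]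

lemma ιMulti_two (v : Fin 2 → V) : ιMulti ℝ 2 v = ι ℝ (v 0) * ι ℝ (v 1) := by
  rw [ιMulti_apply]; simp [List.ofFn_succ]

lemma ιMulti_two_mul (v : Fin 2 → V) (x y : V) :
    ιMulti ℝ 2 v * (ι ℝ x * ι ℝ y) = ιMulti ℝ 4 ![v 0, v 1, x, y] := by
  rw [ιMulti_apply, ιMulti_apply]
  simp [List.ofFn_succ, mul_assoc]

lemma lf4_mul_ιMulti (e : Module.Basis (Fin m) ℝ V) (p q r s : Fin m) (v : Fin 2 → V) (x y : V) :
    lf4 e p q r s (ιMulti ℝ 2 v * (ι ℝ x * ι ℝ y)) = form4 e p q r s ![v 0, v 1, x, y] := by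
  rw [ιMulti_two_mul, lf4, liftAlternating_apply_ιMulti, Pi.single_eq_same]

lemma expand_pair (e : Module.Basis (Fin m) ℝ V) (v : Fin 2 → V) :
    ιMulti ℝ 2 v = ∑ p : Fin m, ∑ q : Fin m,
      (e.repr (v 0) p * e.repr (v 1) q) • (ι ℝ (e p) * ι ℝ (e q)) := by
  rw [ιMulti_two]
  conv_lhs => rw [← e.sum_repr (v 0), ← e.sum_repr (v 1)]
  rw [map_sum, map_sum, Finset.sum_mul_sum]
  simp [smul_mul_assoc, mul_smul_comm, smul_smul]
  exact Finset.sum_congr rfl fun p _ => Finset.sum_congr rfl fun q _ => by rw [mul_comm]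

lemma agree_on_two' {N : Type*} [AddCommGroup N] [Module ℝ N]
    (F G : ExteriorAlgebra ℝ V →ₗ[ℝ] N)
    (h : ∀ v : Fin 2 → V, F (ιMulti ℝ 2 v) = G (ιMulti ℝ 2 v))
    {a : ExteriorAlgebra ℝ V} (ha : a ∈ ⋀[ℝ]^2 V) : F a = G a := by
  rw [← ιMulti_span_fixedDegree] at ha
  induction ha using Submodule.span_induction with
  | mem x hx => obtain ⟨v, rfl⟩ := hx; exact h v
  | zero => simp
  | add x y _ _ hx hy => simp [hx, hy]
  | smul c x _ hx => simp [hx]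

lemma reconstruct (e : Module.Basis (Fin m) ℝ V) {a : ExteriorAlgebra ℝ V} (ha : a ∈ ⋀[ℝ]^2 V) :
    a = (2⁻¹ : ℝ) • ∑ p : Fin m, ∑ q : Fin m,
      lf2 e p q a • (ι ℝ (e p) * ι ℝ (e q)) := by
  have hswap : ∀ p q : Fin m, ι ℝ (e q) * ι ℝ (e p) = -(ι ℝ (e p) * ι ℝ (e q)) := fun p q =>
    eq_neg_of_add_eq_zero_right (ι_add_mul_swap (e p) (e q))
  have := agree_on_two' (LinearMap.id (R := ℝ) (M := ExteriorAlgebra ℝ V))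
    ((2⁻¹ : ℝ) • ∑ p : Fin m, ∑ q : Fin m,
      (lf2 e p q).smulRight (ι ℝ (e p) * ι ℝ (e q))) ?_ ha
  · simpa using this
  intro v
  simp only [LinearMap.id_apply, LinearMap.smul_apply, LinearMap.coe_sum,
    Finset.sum_apply, LinearMap.smulRight_apply, lf2_ιMulti]
  have key : ∑ p : Fin m, ∑ q : Fin m, form2 e p q v • (ι ℝ (e p) * ι ℝ (e q))
      = (2 : ℝ) • ιMulti ℝ 2 v := by
    have h1 : ∑ p : Fin m, ∑ q : Fin m,
        (e.repr (v 0) q * e.repr (v 1) p) • (ι ℝ (e p) * ι ℝ (e q)) = -(ιMulti ℝ 2 v) := by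
      rw [Finset.sum_comm]
      rw [expand_pair e v]
      simp only [← Finset.sum_neg_distrib, ← smul_neg]
      exact Finset.sum_congr rfl fun p _ => Finset.sum_congr rfl fun q _ => by rw [hswap]
    simp only [form2_apply, sub_smul, Finset.sum_sub_distrib, h1, ← expand_pair e v]
    rw [sub_neg_eq_add, two_smul]
  rw [key, smul_smul]
  norm_num

lemma lf2_swap (e : Module.Basis (Fin m) ℝ V) (p q : Fin m) : lf2 e q p = -lf2 e p q := by
  have h : form2 e q p = -form2 e p q := by
    ext v
    rw [AlternatingMap.neg_apply, form2_apply, form2_apply]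
    ring
  rw [lf2, lf2, h, Pi.single_neg, map_neg]

lemma lf2_diag (e : Module.Basis (Fin m) ℝ V) (p : Fin m) : lf2 e p p = 0 := by
  have h : form2 e p p = 0 := by
    ext v
    rw [AlternatingMap.zero_apply, form2_apply]
    ring
  rw [lf2, h, Pi.single_zero, map_zero]

lemma lf4_mul_zero (e : Module.Basis (Fin m) ℝ V) {a : ExteriorAlgebra ℝ V} (ha : a ∈ ⋀[ℝ]^2 V)
    (p q r s x y : Fin m)
    (h : (x ≠ p ∧ x ≠ q ∧ x ≠ r ∧ x ≠ s) ∨ (y ≠ p ∧ y ≠ q ∧ y ≠ r ∧ y ≠ s)) :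
    lf4 e p q r s (a * (ι ℝ (e x) * ι ℝ (e y))) = 0 := by
  have := agree_on_two'
    ((lf4 e p q r s).comp (LinearMap.mulRight ℝ (ι ℝ (e x) * ι ℝ (e y)))) 0 ?_ ha
  · simp only [LinearMap.comp_apply, LinearMap.mulRight_apply, LinearMap.zero_apply] at this
    exact this
  intro v
  simp only [LinearMap.comp_apply, LinearMap.mulRight_apply, LinearMap.zero_apply,
    lf4_mul_ιMulti]
  rcases h with ⟨h1, h2, h3, h4⟩ | ⟨h1, h2, h3, h4⟩
  · exact form4_row2_zero e p q r s x _ _ _ h1 h2 h3 h4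
  · exact form4_row3_zero e p q r s y _ _ _ h1 h2 h3 h4

lemma lf4_mul_back (e : Module.Basis (Fin m) ℝ V) {a : ExteriorAlgebra ℝ V} (ha : a ∈ ⋀[ℝ]^2 V)
    (p q r s : Fin m)
    (hrp : r ≠ p) (hrq : r ≠ q) (hsp : s ≠ p) (hsq : s ≠ q) (hsr : s ≠ r) :
    lf4 e p q r s (a * (ι ℝ (e r) * ι ℝ (e s))) = lf2 e p q a := by
  have := agree_on_two'
    ((lf4 e p q r s).comp (LinearMap.mulRight ℝ (ι ℝ (e r) * ι ℝ (e s)))) (lf2 e p q) ?_ ha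
  · simp only [LinearMap.comp_apply, LinearMap.mulRight_apply] at this
    exact this
  intro v
  simp only [LinearMap.comp_apply, LinearMap.mulRight_apply, lf4_mul_ιMulti, lf2_ιMulti]
  rw [form4_back e p q r s _ _ hrp hrq hsp hsq hsr]
  congr 1
  funext i
  fin_cases i <;> rfl

lemma lf4_mul_front (e : Module.Basis (Fin m) ℝ V) {a : ExteriorAlgebra ℝ V} (ha : a ∈ ⋀[ℝ]^2 V)
    (p q r s : Fin m)
    (hpq : p ≠ q) (hpr : p ≠ r) (hps : p ≠ s) (hqr : q ≠ r) (hqs : q ≠ s) :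
    lf4 e p q r s (a * (ι ℝ (e p) * ι ℝ (e q))) = lf2 e r s a := by
  have := agree_on_two'
    ((lf4 e p q r s).comp (LinearMap.mulRight ℝ (ι ℝ (e p) * ι ℝ (e q)))) (lf2 e r s) ?_ ha
  · simp only [LinearMap.comp_apply, LinearMap.mulRight_apply] at this
    exact this
  intro v
  simp only [LinearMap.comp_apply, LinearMap.mulRight_apply, lf4_mul_ιMulti, lf2_ιMulti]
  rw [form4_front e p q r s _ _ hpq hpr hps hqr hqs]
  congr 1
  funext i
  fin_cases i <;> rfl

end Aux

/-- Let `V` be a vector space of dimension `m ≥ 2n` with `2n ≥ 6`, with basis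
`e₁,…,e_m`, and `ω = e₁∧e₂ + e₃∧e₄ + ⋯ + e_{2n-1}∧e_{2n}`.  Then the only bivector `a`
with `a ∧ ω = 0` is `a = 0`. -/
theorem only_trivial_bivector_annihilates_symplectic
    (m n : ℕ) (hn : 3 ≤ n) (hm : 2 * n ≤ m)
    (V : Type*) [AddCommGroup V] [Module ℝ V] (e : Module.Basis (Fin m) ℝ V)
    (ω : ExteriorAlgebra ℝ V)
    (hω : ω = ∑ i : Fin n,
      ι ℝ (e ⟨2 * i, by have := i.isLt; omega⟩) *
      ι ℝ (e ⟨2 * i + 1, by have := i.isLt; omega⟩))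
    (a : ExteriorAlgebra ℝ V) (ha : a ∈ ⋀[ℝ]^2 V)
    (h : a * ω = 0) : a = 0 := by
  classical
  -- the symplectic index vectors
  set X : Fin n → Fin m := fun k => ⟨2 * k, by have := k.isLt; omega⟩ with hX
  set Y : Fin n → Fin m := fun k => ⟨2 * k + 1, by have := k.isLt; omega⟩ with hY
  -- expansion of lf4 of a * ω
  have hsum : ∀ p q r s : Fin m,
      ∑ k : Fin n, lf4 e p q r s (a * (ι ℝ (e (X k)) * ι ℝ (e (Y k)))) = 0 := by
    intro p q r s
    have : a * ω = ∑ k : Fin n, a * (ι ℝ (e (X k)) * ι ℝ (e (Y k))) := by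
      rw [hω, Finset.mul_sum]
    have h2 : ∑ k : Fin n, a * (ι ℝ (e (X k)) * ι ℝ (e (Y k))) = 0 := by rw [← this, h]
    calc ∑ k : Fin n, lf4 e p q r s (a * (ι ℝ (e (X k)) * ι ℝ (e (Y k))))
        = lf4 e p q r s (∑ k : Fin n, a * (ι ℝ (e (X k)) * ι ℝ (e (Y k)))) := (map_sum _ _ _).symm
      _ = 0 := by rw [h2, map_zero]
  -- Claim 1 : non-symplectic-pair coefficients vanish
  have claim1 : ∀ p q : Fin m, p ≠ q →
      (∀ k : Fin n, ¬((p : ℕ) = 2 * k ∧ (q : ℕ) = 2 * k + 1) ∧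
                    ¬((q : ℕ) = 2 * k ∧ (p : ℕ) = 2 * k + 1)) →
      lf2 e p q a = 0 := by
    intro p q hpq hnb
    -- find a symplectic pair disjoint from {p,q}
    obtain ⟨k0, hk0n, hc1, hc2, hc3, hc4⟩ :
        ∃ k0 : ℕ, k0 < n ∧ 2 * k0 ≠ (p : ℕ) ∧ 2 * k0 + 1 ≠ (p : ℕ) ∧
          2 * k0 ≠ (q : ℕ) ∧ 2 * k0 + 1 ≠ (q : ℕ) := by
      by_cases c0 : 2 * 0 ≠ (p : ℕ) ∧ 2 * 0 + 1 ≠ (p : ℕ) ∧ 2 * 0 ≠ (q : ℕ) ∧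
          2 * 0 + 1 ≠ (q : ℕ)
      · exact ⟨0, by omega, c0.1, c0.2.1, c0.2.2.1, c0.2.2.2⟩
      by_cases c1 : 2 * 1 ≠ (p : ℕ) ∧ 2 * 1 + 1 ≠ (p : ℕ) ∧ 2 * 1 ≠ (q : ℕ) ∧
          2 * 1 + 1 ≠ (q : ℕ)
      · exact ⟨1, by omega, c1.1, c1.2.1, c1.2.2.1, c1.2.2.2⟩
      refine ⟨2, by omega, ?_, ?_, ?_, ?_⟩ <;> (push_neg at c0 c1; omega)
    set k0' : Fin n := ⟨k0, hk0n⟩ with hk0'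
    have hXk0 : ((X k0' : Fin m) : ℕ) = 2 * k0 := rfl
    have hYk0 : ((Y k0' : Fin m) : ℕ) = 2 * k0 + 1 := rfl
    have h0 := hsum p q (X k0') (Y k0')
    rw [Finset.sum_eq_single k0'] at h0
    · rw [lf4_mul_back e ha p q (X k0') (Y k0')
        (Fin.ne_of_val_ne (by omega)) (Fin.ne_of_val_ne (by omega))
        (Fin.ne_of_val_ne (by omega)) (Fin.ne_of_val_ne (by omega))
        (Fin.ne_of_val_ne (by omega))] at h0
      exact h0
    · intro k _ hk
      have hkk0 : (k : ℕ) ≠ k0 := fun hc => hk (Fin.ext (by simpa using hc))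
      apply lf4_mul_zero e ha
      by_cases hx : (2 * (k : ℕ) = (p : ℕ)) ∨ (2 * (k : ℕ) = (q : ℕ))
      · -- then 2k+1 is outside {p,q,2k0,2k0+1}
        right
        have hb1 := (hnb k).1
        have hb2 := (hnb k).2
        refine ⟨Fin.ne_of_val_ne ?_, Fin.ne_of_val_ne ?_, Fin.ne_of_val_ne ?_,
          Fin.ne_of_val_ne ?_⟩ <;> simp only [hY, hXk0, hYk0] <;> omega
      · left
        push_neg at hx
        refine ⟨Fin.ne_of_val_ne ?_, Fin.ne_of_val_ne ?_, Fin.ne_of_val_ne ?_,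
          Fin.ne_of_val_ne ?_⟩ <;> simp only [hX, hXk0, hYk0] <;> omega
    · intro hk0; exact absurd (Finset.mem_univ k0') hk0
  -- Claim 2 : symplectic-pair coefficients vanish
  have claim2 : ∀ l k : Fin n, l ≠ k → lf2 e (X l) (Y l) a + lf2 e (X k) (Y k) a = 0 := by
    intro l k hlk
    have hlkv : (l : ℕ) ≠ (k : ℕ) := fun hc => hlk (Fin.ext hc)
    have h0 := hsum (X l) (Y l) (X k) (Y k)
    have hne : ∀ j : Fin n, j ≠ l → j ≠ k →
        lf4 e (X l) (Y l) (X k) (Y k) (a * (ι ℝ (e (X j)) * ι ℝ (e (Y j)))) = 0 := by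
      intro j hjl hjk
      have hjlv : (j : ℕ) ≠ (l : ℕ) := fun hc => hjl (Fin.ext hc)
      have hjkv : (j : ℕ) ≠ (k : ℕ) := fun hc => hjk (Fin.ext hc)
      apply lf4_mul_zero e ha
      left
      refine ⟨Fin.ne_of_val_ne ?_, Fin.ne_of_val_ne ?_, Fin.ne_of_val_ne ?_,
        Fin.ne_of_val_ne ?_⟩ <;> simp only [hX, hY] <;> omega
    have hsub : ∑ j : Fin n, lf4 e (X l) (Y l) (X k) (Y k)
        (a * (ι ℝ (e (X j)) * ι ℝ (e (Y j)))) =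
        ∑ j ∈ ({l, k} : Finset (Fin n)), lf4 e (X l) (Y l) (X k) (Y k)
        (a * (ι ℝ (e (X j)) * ι ℝ (e (Y j)))) := by
      symm
      apply Finset.sum_subset (Finset.subset_univ _)
      intro j _ hj
      simp only [Finset.mem_insert, Finset.mem_singleton] at hj
      push_neg at hj
      exact hne j hj.1 hj.2
    rw [hsub, Finset.sum_pair hlk] at h0
    rw [lf4_mul_front e ha (X l) (Y l) (X k) (Y k)
        (Fin.ne_of_val_ne (by simp only [hX, hY]; omega))
        (Fin.ne_of_val_ne (by simp only [hX, hY]; omega))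
        (Fin.ne_of_val_ne (by simp only [hX, hY]; omega))
        (Fin.ne_of_val_ne (by simp only [hX, hY]; omega))
        (Fin.ne_of_val_ne (by simp only [hX, hY]; omega)),
      lf4_mul_back e ha (X l) (Y l) (X k) (Y k)
        (Fin.ne_of_val_ne (by simp only [hX, hY]; omega))
        (Fin.ne_of_val_ne (by simp only [hX, hY]; omega))
        (Fin.ne_of_val_ne (by simp only [hX, hY]; omega))
        (Fin.ne_of_val_ne (by simp only [hX, hY]; omega))
        (Fin.ne_of_val_ne (by simp only [hX, hY]; omega))] at h0
    linarith [h0]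
  -- all symplectic-pair coefficients vanish
  have hpairzero : ∀ k : Fin n, lf2 e (X k) (Y k) a = 0 := by
    have k0 : Fin n := ⟨0, by omega⟩
    set f0 : Fin n := ⟨0, by omega⟩ with hf0
    set f1 : Fin n := ⟨1, by omega⟩ with hf1
    set f2 : Fin n := ⟨2, by omega⟩ with hf2
    have h01 := claim2 f0 f1 (by simp [hf0, hf1, Fin.ext_iff])
    have h02 := claim2 f0 f2 (by simp [hf0, hf2, Fin.ext_iff])
    have h12 := claim2 f1 f2 (by simp [hf1, hf2, Fin.ext_iff])
    have hz0 : lf2 e (X f0) (Y f0) a = 0 := by linarith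
    have hz1 : lf2 e (X f1) (Y f1) a = 0 := by linarith
    intro k
    by_cases hk : k = f0
    · rw [hk]; exact hz0
    · have := claim2 k f0 hk
      linarith
  -- every coefficient vanishes
  have hall : ∀ p q : Fin m, lf2 e p q a = 0 := by
    intro p q
    by_cases hpq : p = q
    · rw [hpq, lf2_diag]; rfl
    by_cases hb : ∃ k : Fin n, (p : ℕ) = 2 * k ∧ (q : ℕ) = 2 * k + 1
    · obtain ⟨k, hk1, hk2⟩ := hb
      have hp : p = X k := Fin.ext hk1
      have hq : q = Y k := Fin.ext hk2
      rw [hp, hq]; exact hpairzero k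
    by_cases hb' : ∃ k : Fin n, (q : ℕ) = 2 * k ∧ (p : ℕ) = 2 * k + 1
    · obtain ⟨k, hk1, hk2⟩ := hb'
      have hp : q = X k := Fin.ext hk1
      have hq : p = Y k := Fin.ext hk2
      rw [hp, hq, show lf2 e (Y k) (X k) = -lf2 e (X k) (Y k) from lf2_swap e (X k) (Y k)]
      simp [hpairzero k]
    · push_neg at hb hb'
      apply claim1 p q hpq
      intro k
      constructor
      · intro ⟨h1, h2⟩; exact (hb k h1) h2
      · intro ⟨h1, h2⟩; exact (hb' k h1) h2
  -- conclude via reconstruction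
  rw [reconstruct e ha]
  simp [hall]
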